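/- arXiv:2605.27802 — 3 statements merged into one kernel-verified Lean document; each statement's English description precedes it below -/
import Mathlib

section
/- Let d ≥ 1 and 0 < s < d. There exists a constant C > 0, depending only on d and s, such that for every v ∈ ℝ^d: ∫_{ℝ^d} |v − v_*|^{-s} (1 + |v_*|^2)^{-(d+1)/2} dv_* ≤ C (1 + |v|^2)^{-s/2}. -/
open MeasureTheory

open Metric ENNReal in
set_option maxHeartbeats 2000000 in
lemma K1_finite {d : ℕ} (hd : 1 ≤ d) {s : ℝ} (hs0 : 0 < s) (hsd : s < d) :
    ∫⁻ u in ball (0 : EuclideanSpace ℝ (Fin d)) 1, ENNReal.ofReal (‖u‖ ^ (-s)) < ⊤ := by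
  set E := EuclideanSpace ℝ (Fin d)
  haveI : Nontrivial E := Module.nontrivial_of_finrank_pos (R := ℝ)
    (by rw [finrank_euclideanSpace_fin]; omega)
  set μ : Measure E := volume
  set B := μ (ball (0 : E) 1) with hB
  have hBfin : B < ⊤ := measure_ball_lt_top
  set A : ℕ → Set E := fun k => ball 0 ((2:ℝ)⁻¹ ^ k) \ ball 0 ((2:ℝ)⁻¹ ^ (k + 1)) with hA
  -- covering
  have hcover : ball (0 : E) 1 \ {0} ⊆ ⋃ k, A k := by
    rintro u ⟨hu1, hu0⟩
    have hun : 0 < ‖u‖ := by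
      exact norm_pos_iff.mpr (by simpa using hu0)
    have hub : ‖u‖ < 1 := by simpa [mem_ball, dist_eq_norm] using hu1
    have hex : ∃ k : ℕ, (2:ℝ)⁻¹ ^ (k + 1) ≤ ‖u‖ := by
      obtain ⟨k, hk⟩ := exists_pow_lt_of_lt_one hun (by norm_num : (2:ℝ)⁻¹ < 1)
      exact ⟨k, by
        calc (2:ℝ)⁻¹ ^ (k+1) ≤ (2:ℝ)⁻¹ ^ k := by
              exact pow_le_pow_of_le_one (by norm_num) (by norm_num) (by omega)
          _ ≤ ‖u‖ := hk.le⟩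
    classical
    set k := Nat.find hex with hkdef
    have hk1 : (2:ℝ)⁻¹ ^ (k + 1) ≤ ‖u‖ := Nat.find_spec hex
    have hk2 : ‖u‖ < (2:ℝ)⁻¹ ^ k := by
      rcases Nat.eq_zero_or_pos k with h0 | hpos
      · rw [h0]; simpa using hub
      · have := Nat.find_min hex (m := k - 1) (by omega)
        push_neg at this
        have : ‖u‖ < (2:ℝ)⁻¹ ^ (k - 1 + 1) := lt_of_not_ge (by simpa using Nat.find_min hex (by omega : k - 1 < k))
        simpa [Nat.sub_add_cancel hpos] using this
    exact Set.mem_iUnion.2 ⟨k, by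
      constructor
      · simpa [mem_ball, dist_eq_norm] using hk2
      · simp only [mem_ball, dist_eq_norm, sub_zero, not_lt]
        simpa using hk1⟩
  -- reduce to union
  have hzero : μ ({(0 : E)} : Set E) = 0 := measure_singleton 0
  have step1 : ∫⁻ u in ball (0 : E) 1, ENNReal.ofReal (‖u‖ ^ (-s)) ∂μ
      ≤ ∑' k, ∫⁻ u in A k, ENNReal.ofReal (‖u‖ ^ (-s)) ∂μ := by
    have h1 : ∫⁻ u in ball (0 : E) 1, ENNReal.ofReal (‖u‖ ^ (-s)) ∂μ
        = ∫⁻ u in ball (0 : E) 1 \ {0}, ENNReal.ofReal (‖u‖ ^ (-s)) ∂μ := by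
      exact (setLIntegral_congr (diff_ae_eq_self.mpr (measure_mono_null Set.inter_subset_right hzero))).symm
    rw [h1]
    calc ∫⁻ u in ball (0 : E) 1 \ {0}, ENNReal.ofReal (‖u‖ ^ (-s)) ∂μ
        ≤ ∫⁻ u in ⋃ k, A k, ENNReal.ofReal (‖u‖ ^ (-s)) ∂μ :=
          lintegral_mono_set hcover
      _ ≤ ∑' k, ∫⁻ u in A k, ENNReal.ofReal (‖u‖ ^ (-s)) ∂μ := lintegral_iUnion_le _ _
  -- per-annulus bound
  have hterm : ∀ k : ℕ, ∫⁻ u in A k, ENNReal.ofReal (‖u‖ ^ (-s)) ∂μ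
      ≤ ENNReal.ofReal (2 ^ s * ((2:ℝ) ^ (s - (d:ℝ))) ^ k) * B := by
    intro k
    have hq : (0:ℝ) < (2:ℝ)⁻¹ ^ (k+1) := by positivity
    have hb : ∀ u ∈ A k, ENNReal.ofReal (‖u‖ ^ (-s))
        ≤ ENNReal.ofReal (((2:ℝ)⁻¹ ^ (k+1)) ^ (-s)) := by
      rintro u ⟨-, hu2⟩
      have : (2:ℝ)⁻¹ ^ (k+1) ≤ ‖u‖ := by
        simpa [mem_ball, dist_eq_norm, not_lt] using hu2
      exact ENNReal.ofReal_le_ofReal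
        (Real.rpow_le_rpow_of_nonpos hq this (neg_nonpos.mpr hs0.le))
    calc ∫⁻ u in A k, ENNReal.ofReal (‖u‖ ^ (-s)) ∂μ
        ≤ ∫⁻ _ in A k, ENNReal.ofReal (((2:ℝ)⁻¹ ^ (k+1)) ^ (-s)) ∂μ :=
          setLIntegral_mono' (measurableSet_ball.diff measurableSet_ball) hb
      _ = ENNReal.ofReal (((2:ℝ)⁻¹ ^ (k+1)) ^ (-s)) * μ (A k) := setLIntegral_const _ _
      _ ≤ ENNReal.ofReal (((2:ℝ)⁻¹ ^ (k+1)) ^ (-s)) * μ (ball (0:E) ((2:ℝ)⁻¹ ^ k)) := by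
          gcongr
          exact Set.diff_subset
      _ = ENNReal.ofReal (((2:ℝ)⁻¹ ^ (k+1)) ^ (-s)) *
            (ENNReal.ofReal (((2:ℝ)⁻¹ ^ k) ^ Module.finrank ℝ E) * B) := by
          rw [Measure.addHaar_ball μ _ (by positivity)]
      _ = ENNReal.ofReal (2 ^ s * ((2:ℝ) ^ (s - (d:ℝ))) ^ k) * B := by
          rw [← mul_assoc, ← ENNReal.ofReal_mul (by positivity)]
          congr 2
          have h2 : ∀ n : ℕ, ((2:ℝ)⁻¹) ^ n = (2:ℝ) ^ (-(n:ℝ)) := by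
            intro n
            rw [inv_pow, ← Real.rpow_natCast 2 n, ← Real.rpow_neg (by norm_num)]
          have hfr : Module.finrank ℝ E = d := finrank_euclideanSpace_fin
          rw [hfr, h2, h2, ← Real.rpow_natCast ((2:ℝ) ^ (s - (d:ℝ))) k,
            ← Real.rpow_natCast ((2:ℝ) ^ (-(k:ℝ))) d,
            ← Real.rpow_mul (by norm_num), ← Real.rpow_mul (by norm_num),
            ← Real.rpow_mul (by norm_num),
            ← Real.rpow_add (by norm_num), ← Real.rpow_add (by norm_num)]
          congr 1
          push_cast
          ring
  -- geometric sum
  have hr1 : ENNReal.ofReal ((2:ℝ) ^ (s - (d:ℝ))) < 1 := by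
    rw [ENNReal.ofReal_lt_one]
    exact Real.rpow_lt_one_of_one_lt_of_neg (by norm_num) (by
      have : (s:ℝ) < (d:ℝ) := hsd
      linarith)
  calc ∫⁻ u in ball (0 : E) 1, ENNReal.ofReal (‖u‖ ^ (-s)) ∂μ
      ≤ ∑' k, ∫⁻ u in A k, ENNReal.ofReal (‖u‖ ^ (-s)) ∂μ := step1
    _ ≤ ∑' k, ENNReal.ofReal (2 ^ s * ((2:ℝ) ^ (s - (d:ℝ))) ^ k) * B :=
        ENNReal.tsum_le_tsum hterm
    _ = ENNReal.ofReal (2 ^ s) * B * ∑' k, ENNReal.ofReal ((2:ℝ) ^ (s - (d:ℝ))) ^ k := by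
        rw [← ENNReal.tsum_mul_left]
        congr 1
        ext k
        rw [ENNReal.ofReal_mul (by positivity), ENNReal.ofReal_pow (by positivity)]
        ring
    _ < ⊤ := by
        rw [ENNReal.tsum_geometric]
        refine ENNReal.mul_lt_top (ENNReal.mul_lt_top ENNReal.ofReal_lt_top hBfin) ?_
        rw [ENNReal.inv_lt_top]
        exact tsub_pos_of_lt hr1

open Metric ENNReal in
set_option maxHeartbeats 2000000 in
lemma K_scale {d : ℕ} (hd : 1 ≤ d) {s : ℝ} (hs0 : 0 < s) {R : ℝ} (hR : 0 < R) :
    ∫⁻ u in ball (0 : EuclideanSpace ℝ (Fin d)) R, ENNReal.ofReal (‖u‖ ^ (-s))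
      = ENNReal.ofReal (R ^ ((d:ℝ) - s)) *
        ∫⁻ u in ball (0 : EuclideanSpace ℝ (Fin d)) 1, ENNReal.ofReal (‖u‖ ^ (-s)) := by
  set E := EuclideanSpace ℝ (Fin d)
  set μ : Measure E := volume
  have hfr : Module.finrank ℝ E = d := finrank_euclideanSpace_fin
  set F : E → ℝ≥0∞ := (ball (0:E) R).indicator (fun u => ENNReal.ofReal (‖u‖ ^ (-s))) with hF
  have hFm : Measurable F := by
    apply Measurable.indicator ?_ measurableSet_ball
    fun_prop
  have hmap := Measure.map_addHaar_smul μ (E := E) hR.ne'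
  have h1 : ∫⁻ y, F y ∂(Measure.map (R • ·) μ) = ∫⁻ x, F (R • x) ∂μ :=
    lintegral_map hFm (measurable_const_smul R)
  rw [hmap, lintegral_smul_measure] at h1
  have h2 : ∀ x : E, F (R • x) =
      (ball (0:E) 1).indicator (fun x => ENNReal.ofReal (R ^ (-s)) * ENNReal.ofReal (‖x‖ ^ (-s))) x := by
    intro x
    have hnorm : ‖R • x‖ = R * ‖x‖ := by
      rw [norm_smul, Real.norm_eq_abs, abs_of_pos hR]
    have hmem : R • x ∈ ball (0:E) R ↔ x ∈ ball (0:E) 1 := by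
      rw [mem_ball_zero_iff, mem_ball_zero_iff, hnorm]
      constructor
      · intro h; nlinarith
      · intro h; nlinarith
    by_cases hx : x ∈ ball (0:E) 1
    · rw [Set.indicator_of_mem hx, hF, Set.indicator_of_mem (hmem.mpr hx)]
      rw [hnorm, Real.mul_rpow hR.le (norm_nonneg x), ENNReal.ofReal_mul (by positivity)]
    · rw [Set.indicator_of_notMem hx, hF, Set.indicator_of_notMem (fun h => hx (hmem.mp h))]
  simp only [h2] at h1
  rw [lintegral_indicator measurableSet_ball] at h1
  rw [lintegral_indicator measurableSet_ball] at h1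
  have hconst : ∫⁻ x in ball (0:E) 1,
      (fun x : E => ENNReal.ofReal (R ^ (-s)) * ENNReal.ofReal (‖x‖ ^ (-s))) x ∂μ
      = ENNReal.ofReal (R ^ (-s)) * ∫⁻ x in ball (0:E) 1, ENNReal.ofReal (‖x‖ ^ (-s)) ∂μ :=
    lintegral_const_mul' _ _ ENNReal.ofReal_ne_top
  rw [hconst] at h1
  -- h1 : ofReal |R^d|⁻¹ * K R = ofReal (R^(-s)) * K 1
  have hcancel : ENNReal.ofReal (R ^ (d:ℕ)) * ENNReal.ofReal |(R ^ Module.finrank ℝ E)⁻¹| = 1 := by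
    rw [hfr, ← ENNReal.ofReal_mul (by positivity), abs_of_pos (by positivity),
      mul_inv_cancel₀ (by positivity), ENNReal.ofReal_one]
  calc ∫⁻ u in ball (0:E) R, ENNReal.ofReal (‖u‖ ^ (-s)) ∂μ
      = ENNReal.ofReal (R ^ (d:ℕ)) * ENNReal.ofReal |(R ^ Module.finrank ℝ E)⁻¹| *
          ∫⁻ u in ball (0:E) R, ENNReal.ofReal (‖u‖ ^ (-s)) ∂μ := by rw [hcancel, one_mul]
    _ = ENNReal.ofReal (R ^ (d:ℕ)) * (ENNReal.ofReal (R ^ (-s)) *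
          ∫⁻ u in ball (0:E) 1, ENNReal.ofReal (‖u‖ ^ (-s)) ∂μ) := by rw [mul_assoc, ← h1, smul_eq_mul]
    _ = ENNReal.ofReal (R ^ ((d:ℝ) - s)) *
          ∫⁻ u in ball (0:E) 1, ENNReal.ofReal (‖u‖ ^ (-s)) ∂μ := by
        rw [← mul_assoc, ← ENNReal.ofReal_mul (by positivity)]
        congr 2
        rw [← Real.rpow_natCast R d, ← Real.rpow_add hR, sub_eq_add_neg]

open Metric ENNReal in
set_option maxHeartbeats 2000000 in
lemma K_transl {d : ℕ} (s : ℝ) (v : EuclideanSpace ℝ (Fin d)) (R : ℝ) :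
    ∫⁻ w in ball v R, ENNReal.ofReal (‖v - w‖ ^ (-s))
      = ∫⁻ u in ball (0 : EuclideanSpace ℝ (Fin d)) R, ENNReal.ofReal (‖u‖ ^ (-s)) := by
  set g : EuclideanSpace ℝ (Fin d) → ℝ≥0∞ := fun u => ENNReal.ofReal (‖u‖ ^ (-s)) with hg
  have hgm : Measurable g := by fun_prop
  have hmp : MeasurePreserving (fun w : EuclideanSpace ℝ (Fin d) => v - w) volume volume :=
    Measure.measurePreserving_sub_left volume v
  have h1 : ∫⁻ w in ball v R, g (v - w)
      = ∫⁻ w, (ball (0 : EuclideanSpace ℝ (Fin d)) R).indicator g (v - w) := by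
    rw [← lintegral_indicator measurableSet_ball]
    congr 1
    ext w
    have hmem : w ∈ ball v R ↔ v - w ∈ ball (0 : EuclideanSpace ℝ (Fin d)) R := by
      simp only [mem_ball, dist_eq_norm, sub_zero]
      rw [norm_sub_rev]
    by_cases hw : w ∈ ball v R
    · rw [Set.indicator_of_mem hw, Set.indicator_of_mem (hmem.mp hw)]
    · rw [Set.indicator_of_notMem hw, Set.indicator_of_notMem (fun h => hw (hmem.mpr h))]
  calc ∫⁻ w in ball v R, g (v - w) = _ := h1
    _ = ∫⁻ u, (ball (0 : EuclideanSpace ℝ (Fin d)) R).indicator g u :=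
        hmp.lintegral_comp (hgm.indicator measurableSet_ball)
    _ = ∫⁻ u in ball (0 : EuclideanSpace ℝ (Fin d)) R, g u :=
        lintegral_indicator measurableSet_ball g

open Metric ENNReal in
set_option maxHeartbeats 2000000 in
theorem riesz_potential_decay (d : ℕ) (hd : 1 ≤ d) (s : ℝ) (hs0 : 0 < s) (hsd : s < d) :
    ∃ C : ℝ, 0 < C ∧ ∀ v : EuclideanSpace ℝ (Fin d),
      (∫ w : EuclideanSpace ℝ (Fin d),
          ‖v - w‖ ^ (-s) * (1 + ‖w‖ ^ 2) ^ (-((d : ℝ) + 1) / 2)) ≤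
        C * (1 + ‖v‖ ^ 2) ^ (-s / 2) := by
  have hfr : Module.finrank ℝ (EuclideanSpace ℝ (Fin d)) = d := finrank_euclideanSpace_fin
  have he0 : -((d : ℝ) + 1) / 2 ≤ 0 := by
    have : (0:ℝ) ≤ ((d:ℝ) + 1) / 2 := by positivity
    linarith [this, neg_div (2:ℝ) ((d:ℝ)+1)]
  set K1 : ℝ≥0∞ := ∫⁻ u in ball (0 : EuclideanSpace ℝ (Fin d)) 1,
      ENNReal.ofReal (‖u‖ ^ (-s)) with hK1def
  have hK1fin : K1 < ⊤ := K1_finite hd hs0 hsd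
  set J : ℝ≥0∞ := ∫⁻ w : EuclideanSpace ℝ (Fin d),
      ENNReal.ofReal ((1 + ‖w‖ ^ 2) ^ (-((d : ℝ) + 1) / 2)) with hJdef
  have hJfin : J < ⊤ := by
    have hint : Integrable
        (fun w : EuclideanSpace ℝ (Fin d) => ((1:ℝ) + ‖w‖ ^ 2) ^ (-((d:ℝ) + 1) / 2)) volume := by
      exact integrable_rpow_neg_one_add_norm_sq (by rw [hfr]; exact lt_add_one _)
    have h2 := hint.hasFiniteIntegral
    rwa [hasFiniteIntegral_iff_ofReal (Filter.Eventually.of_forall fun w => by positivity)] at h2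
  set K1r := K1.toReal with hK1r
  set Jr := J.toReal with hJr
  have hK1eq : K1 = ENNReal.ofReal K1r := (ENNReal.ofReal_toReal hK1fin.ne).symm
  have hJeq : J = ENNReal.ofReal Jr := (ENNReal.ofReal_toReal hJfin.ne).symm
  have hK1r0 : 0 ≤ K1r := ENNReal.toReal_nonneg
  have hJr0 : 0 ≤ Jr := ENNReal.toReal_nonneg
  set c₁ : ℝ := (4:ℝ) ^ (((d:ℝ) + 1) / 2) with hc₁
  set c₂ : ℝ := (2 * Real.sqrt 2) ^ s with hc₂
  have hc₁0 : 0 < c₁ := by positivity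
  have hc₂0 : 0 < c₂ := by positivity
  set C : ℝ := max ((K1r + Jr) * 2 ^ (s / 2)) (c₁ * K1r + c₂ * Jr) + 1 with hC
  have hCmax0 : 0 ≤ max ((K1r + Jr) * 2 ^ (s / 2)) (c₁ * K1r + c₂ * Jr) :=
    le_max_of_le_left (by positivity)
  have hC0 : 0 < C := by rw [hC]; linarith [hCmax0]
  refine ⟨C, hC0, fun v => ?_⟩
  set A : ℝ := 1 + ‖v‖ ^ 2 with hAdef
  have hA1 : 1 ≤ A := by have := sq_nonneg ‖v‖ ; simp only [hAdef] ; nlinarith [norm_nonneg v]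
  have hA0 : 0 < A := by linarith
  have hAneg0 : 0 ≤ A ^ (-s / 2) := Real.rpow_nonneg hA0.le _
  -- the main lintegral bound
  have hmain : (∫⁻ w : EuclideanSpace ℝ (Fin d),
        ENNReal.ofReal (‖v - w‖ ^ (-s)) *
          ENNReal.ofReal ((1 + ‖w‖ ^ 2) ^ (-((d : ℝ) + 1) / 2)))
      ≤ ENNReal.ofReal (C * A ^ (-s / 2)) := by
    set e : ℝ := -((d : ℝ) + 1) / 2 with he
    set ker : EuclideanSpace ℝ (Fin d) → ℝ≥0∞ :=
      fun w => ENNReal.ofReal (‖v - w‖ ^ (-s)) with hker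
    set wt : EuclideanSpace ℝ (Fin d) → ℝ≥0∞ :=
      fun w => ENNReal.ofReal ((1 + ‖w‖ ^ 2) ^ e) with hwt
    have hwtJ : ∫⁻ w, wt w = J := rfl
    by_cases hv : ‖v‖ ≤ 1
    · -- small v
      have hA2 : A ≤ 2 := by rw [hAdef]; nlinarith [norm_nonneg v]
      rw [← lintegral_add_compl (fun w => ker w * wt w) (measurableSet_ball (x := v) (ε := 1))]
      have hnear : ∫⁻ w in ball v 1, ker w * wt w ≤ K1 := by
        calc ∫⁻ w in ball v 1, ker w * wt w
            ≤ ∫⁻ w in ball v 1, ker w := by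
              refine setLIntegral_mono' measurableSet_ball fun w _ => ?_
              have hwle : wt w ≤ 1 := by
                rw [hwt]
                refine ENNReal.ofReal_le_one.mpr ?_
                exact Real.rpow_le_one_of_one_le_of_nonpos
                  (by nlinarith [sq_nonneg ‖w‖]) he0
              calc ker w * wt w ≤ ker w * 1 := mul_le_mul_right hwle _
                _ = ker w := mul_one _
          _ = K1 := K_transl s v 1
      have hfar : ∫⁻ w in (ball v 1)ᶜ, ker w * wt w ≤ J := by
        calc ∫⁻ w in (ball v 1)ᶜ, ker w * wt w
            ≤ ∫⁻ w in (ball v 1)ᶜ, wt w := by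
              refine setLIntegral_mono' measurableSet_ball.compl fun w hw => ?_
              have h1 : (1:ℝ) ≤ ‖v - w‖ := by
                have := hw
                simp only [Set.mem_compl_iff, mem_ball, not_lt] at this
                rwa [dist_eq_norm, norm_sub_rev] at this
              have hkle : ker w ≤ 1 := by
                rw [hker]
                exact ENNReal.ofReal_le_one.mpr
                  (Real.rpow_le_one_of_one_le_of_nonpos h1 (neg_nonpos.mpr hs0.le))
              calc ker w * wt w ≤ 1 * wt w := mul_le_mul_left hkle _
                _ = wt w := one_mul _
          _ ≤ ∫⁻ w, wt w := setLIntegral_le_lintegral _ _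
          _ = J := hwtJ
      have hreal : K1r + Jr ≤ C * A ^ (-s / 2) := by
        have h2A : (2:ℝ) ^ (-s / 2) ≤ A ^ (-s / 2) :=
          Real.rpow_le_rpow_of_nonpos hA0 hA2 (by linarith)
        have hCge : (K1r + Jr) * 2 ^ (s / 2) ≤ C := by
          rw [hC]
          have := le_max_left ((K1r + Jr) * 2 ^ (s / 2)) (c₁ * K1r + c₂ * Jr)
          linarith
        have hcancel : (2:ℝ) ^ (s / 2) * (2:ℝ) ^ (-s / 2) = 1 := by
          rw [← Real.rpow_add (by norm_num : (0:ℝ) < 2),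
            show s / 2 + -s / 2 = 0 by ring, Real.rpow_zero]
        calc K1r + Jr = (K1r + Jr) * ((2:ℝ) ^ (s / 2) * (2:ℝ) ^ (-s / 2)) := by
              rw [hcancel, mul_one]
          _ = ((K1r + Jr) * 2 ^ (s / 2)) * (2:ℝ) ^ (-s / 2) := by ring
          _ ≤ C * A ^ (-s / 2) :=
              mul_le_mul hCge h2A (by positivity) hC0.le
      calc (∫⁻ w in ball v 1, ker w * wt w) + ∫⁻ w in (ball v 1)ᶜ, ker w * wt w
          ≤ K1 + J := add_le_add hnear hfar
        _ = ENNReal.ofReal K1r + ENNReal.ofReal Jr := by rw [← hK1eq, ← hJeq]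
        _ = ENNReal.ofReal (K1r + Jr) := (ENNReal.ofReal_add hK1r0 hJr0).symm
        _ ≤ ENNReal.ofReal (C * A ^ (-s / 2)) := ENNReal.ofReal_le_ofReal hreal
    · -- large v
      push_neg at hv
      set R : ℝ := ‖v‖ / 2 with hRdef
      have hR : 0 < R := by rw [hRdef]; linarith
      set a : ℝ := Real.sqrt A with hadef
      have ha0 : 0 < a := Real.sqrt_pos.mpr hA0
      have haA : a = A ^ ((1:ℝ)/2) := by rw [hadef, Real.sqrt_eq_rpow]
      have hva : ‖v‖ ≤ a := by
        rw [hadef]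
        exact (Real.le_sqrt (norm_nonneg v) hA0.le).mpr (by rw [hAdef]; nlinarith)
      have hRa : R ≤ a := by rw [hRdef]; linarith [norm_nonneg v]
      have haR : a / (2 * Real.sqrt 2) ≤ R := by
        have h2v : A ≤ 2 * ‖v‖ ^ 2 := by rw [hAdef]; nlinarith
        have : a ≤ Real.sqrt 2 * ‖v‖ := by
          rw [hadef]
          calc Real.sqrt A ≤ Real.sqrt (2 * ‖v‖ ^ 2) := Real.sqrt_le_sqrt h2v
            _ = Real.sqrt 2 * ‖v‖ := by
                rw [Real.sqrt_mul (by norm_num), Real.sqrt_sq (norm_nonneg v)]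
        rw [hRdef, div_le_div_iff₀ (by positivity) (by norm_num)]
        nlinarith [Real.sq_sqrt (by norm_num : (0:ℝ) ≤ 2), Real.sqrt_nonneg 2]
      have hans : a ^ (-s) = A ^ (-s / 2) := by
        rw [haA, ← Real.rpow_mul hA0.le]
        congr 1
        ring
      rw [← lintegral_add_compl (fun w => ker w * wt w) (measurableSet_ball (x := v) (ε := R))]
      -- near part
      have hwtb : ∀ w ∈ ball v R, wt w ≤ ENNReal.ofReal (c₁ * A ^ e) := by
        intro w hw
        have hdist : ‖v - w‖ < R := by
          have := mem_ball.mp hw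
          rwa [dist_eq_norm, norm_sub_rev] at this
        have hnw : ‖v‖ - ‖w‖ ≤ ‖v - w‖ := norm_sub_norm_le v w
        have hwn : R ≤ ‖w‖ := by rw [hRdef] at *; linarith
        have hAw : A / 4 ≤ 1 + ‖w‖ ^ 2 := by
          rw [hAdef]
          nlinarith [norm_nonneg w, norm_nonneg v]
        have hdivp : (0:ℝ) < A / 4 := by linarith
        have h1 : (1 + ‖w‖ ^ 2) ^ e ≤ (A / 4) ^ e :=
          Real.rpow_le_rpow_of_nonpos hdivp hAw he0
        have h2 : (A / 4) ^ e = c₁ * A ^ e := by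
          rw [Real.div_rpow hA0.le (by norm_num : (0:ℝ) ≤ 4), div_eq_mul_inv,
            ← Real.rpow_neg (by norm_num : (0:ℝ) ≤ 4), hc₁,
            show -e = ((d:ℝ) + 1) / 2 by rw [he]; ring]
          ring
        rw [hwt]
        exact ENNReal.ofReal_le_ofReal (by rw [← h2]; exact h1)
      have hnear : ∫⁻ w in ball v R, ker w * wt w
          ≤ ENNReal.ofReal (c₁ * A ^ e) * (ENNReal.ofReal (R ^ ((d:ℝ) - s)) * K1) := by
        calc ∫⁻ w in ball v R, ker w * wt w
            ≤ ∫⁻ w in ball v R, ENNReal.ofReal (c₁ * A ^ e) * ker w := by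
              refine setLIntegral_mono' measurableSet_ball fun w hw => ?_
              calc ker w * wt w ≤ ker w * ENNReal.ofReal (c₁ * A ^ e) :=
                    mul_le_mul_right (hwtb w hw) _
                _ = ENNReal.ofReal (c₁ * A ^ e) * ker w := mul_comm _ _
          _ = ENNReal.ofReal (c₁ * A ^ e) * ∫⁻ w in ball v R, ker w :=
              lintegral_const_mul' _ _ ENNReal.ofReal_ne_top
          _ = ENNReal.ofReal (c₁ * A ^ e) * (ENNReal.ofReal (R ^ ((d:ℝ) - s)) * K1) := by
              rw [hker]
              rw [K_transl s v R, K_scale hd hs0 hR]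
      -- far part
      have hfar : ∫⁻ w in (ball v R)ᶜ, ker w * wt w
          ≤ ENNReal.ofReal (c₂ * A ^ (-s / 2)) * J := by
        have hkb : ∀ w ∈ (ball v R)ᶜ, ker w ≤ ENNReal.ofReal (c₂ * A ^ (-s / 2)) := by
          intro w hw
          have hdist : R ≤ ‖v - w‖ := by
            have := hw
            simp only [Set.mem_compl_iff, mem_ball, not_lt] at this
            rwa [dist_eq_norm, norm_sub_rev] at this
          have hb0 : (0:ℝ) < a / (2 * Real.sqrt 2) := by positivity
          have h1 : ‖v - w‖ ^ (-s) ≤ (a / (2 * Real.sqrt 2)) ^ (-s) :=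
            Real.rpow_le_rpow_of_nonpos hb0 (le_trans haR hdist) (neg_nonpos.mpr hs0.le)
          have h2 : (a / (2 * Real.sqrt 2)) ^ (-s) = c₂ * A ^ (-s / 2) := by
            rw [Real.div_rpow ha0.le (by positivity), hans,
              Real.rpow_neg (by positivity : (0:ℝ) ≤ 2 * Real.sqrt 2) s,
              div_eq_mul_inv, inv_inv, hc₂]
            ring
          rw [hker]
          exact ENNReal.ofReal_le_ofReal (h2 ▸ h1)
        calc ∫⁻ w in (ball v R)ᶜ, ker w * wt w
            ≤ ∫⁻ w in (ball v R)ᶜ, ENNReal.ofReal (c₂ * A ^ (-s / 2)) * wt w := by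
              refine setLIntegral_mono' measurableSet_ball.compl fun w hw => ?_
              exact mul_le_mul_left (hkb w hw) _
          _ = ENNReal.ofReal (c₂ * A ^ (-s / 2)) * ∫⁻ w in (ball v R)ᶜ, wt w :=
              lintegral_const_mul' _ _ ENNReal.ofReal_ne_top
          _ ≤ ENNReal.ofReal (c₂ * A ^ (-s / 2)) * J := by
              refine mul_le_mul_right ?_ _
              rw [← hwtJ]
              exact setLIntegral_le_lintegral _ _
      -- combine
      have hRd : c₁ * A ^ e * R ^ ((d:ℝ) - s) ≤ c₁ * A ^ (-s / 2) := by
        have h1 : R ^ ((d:ℝ) - s) ≤ a ^ ((d:ℝ) - s) :=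
          Real.rpow_le_rpow hR.le hRa (by linarith)
        have h2 : a ^ ((d:ℝ) - s) = A ^ (((d:ℝ) - s) / 2) := by
          rw [haA, ← Real.rpow_mul hA0.le]
          congr 1
          ring
        have h3 : A ^ e * A ^ (((d:ℝ) - s) / 2) ≤ A ^ (-s / 2) := by
          rw [← Real.rpow_add hA0]
          refine Real.rpow_le_rpow_of_exponent_le hA1 ?_
          rw [he]
          linarith
        calc c₁ * A ^ e * R ^ ((d:ℝ) - s) ≤ c₁ * A ^ e * a ^ ((d:ℝ) - s) := by
              have hAe0 : (0:ℝ) ≤ A ^ e := Real.rpow_nonneg hA0.le _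
              exact mul_le_mul_of_nonneg_left h1 (by positivity)
          _ = c₁ * (A ^ e * A ^ (((d:ℝ) - s) / 2)) := by rw [h2]; ring
          _ ≤ c₁ * A ^ (-s / 2) := mul_le_mul_of_nonneg_left h3 hc₁0.le
      calc (∫⁻ w in ball v R, ker w * wt w) + ∫⁻ w in (ball v R)ᶜ, ker w * wt w
          ≤ ENNReal.ofReal (c₁ * A ^ e) * (ENNReal.ofReal (R ^ ((d:ℝ) - s)) * K1)
            + ENNReal.ofReal (c₂ * A ^ (-s / 2)) * J := add_le_add hnear hfar
        _ = ENNReal.ofReal (c₁ * A ^ e * R ^ ((d:ℝ) - s)) * K1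
            + ENNReal.ofReal (c₂ * A ^ (-s / 2)) * J := by
            rw [← mul_assoc, ← ENNReal.ofReal_mul (by positivity)]
        _ ≤ ENNReal.ofReal (c₁ * A ^ (-s / 2)) * ENNReal.ofReal K1r
            + ENNReal.ofReal (c₂ * A ^ (-s / 2)) * ENNReal.ofReal Jr := by
            rw [← hK1eq, ← hJeq]
            exact add_le_add (mul_le_mul_left (ENNReal.ofReal_le_ofReal hRd) _) le_rfl
        _ = ENNReal.ofReal ((c₁ * K1r + c₂ * Jr) * A ^ (-s / 2)) := by
            rw [← ENNReal.ofReal_mul (by positivity), ← ENNReal.ofReal_mul (by positivity),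
              ← ENNReal.ofReal_add (by positivity) (by positivity)]
            congr 1
            ring
        _ ≤ ENNReal.ofReal (C * A ^ (-s / 2)) := by
            refine ENNReal.ofReal_le_ofReal ?_
            have hle : c₁ * K1r + c₂ * Jr ≤ C := by
              rw [hC]
              have := le_max_right ((K1r + Jr) * 2 ^ (s / 2)) (c₁ * K1r + c₂ * Jr)
              linarith
            exact mul_le_mul_of_nonneg_right hle hAneg0
  -- conclude
  have hnn : 0 ≤ᵐ[volume] fun w : EuclideanSpace ℝ (Fin d) =>
      ‖v - w‖ ^ (-s) * (1 + ‖w‖ ^ 2) ^ (-((d : ℝ) + 1) / 2) :=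
    Filter.Eventually.of_forall fun w => by positivity
  have hms : AEStronglyMeasurable (fun w : EuclideanSpace ℝ (Fin d) =>
      ‖v - w‖ ^ (-s) * (1 + ‖w‖ ^ 2) ^ (-((d : ℝ) + 1) / 2)) volume := by
    apply Measurable.aestronglyMeasurable
    fun_prop
  rw [integral_eq_lintegral_of_nonneg_ae hnn hms]
  have hsplit : (∫⁻ w : EuclideanSpace ℝ (Fin d),
        ENNReal.ofReal (‖v - w‖ ^ (-s) * (1 + ‖w‖ ^ 2) ^ (-((d : ℝ) + 1) / 2)))
      = ∫⁻ w : EuclideanSpace ℝ (Fin d),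
        ENNReal.ofReal (‖v - w‖ ^ (-s)) *
          ENNReal.ofReal ((1 + ‖w‖ ^ 2) ^ (-((d : ℝ) + 1) / 2)) := by
    congr 1
    ext w
    exact ENNReal.ofReal_mul (by positivity)
  rw [hsplit]
  exact ENNReal.toReal_le_of_le_ofReal (by positivity) hmain
end

section
/- Let d ≥ 2 and r₀ > 1/2. There exists a constant C > 0, depending only on d and r₀, such that for every v ∈ ℝ^d: ∫_{S^{d−1}} (1 + (ω·v)^2)^{-r₀} dσ(ω) ≤ C (1 + |v|^2)^{-1/2}, where σ is the surface (spherical) measure on the unit sphere S^{d−1} ⊂ ℝ^d. -/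
open MeasureTheory Real Set Metric




noncomputable def ff (r₀ : ℝ) : ℝ → ℝ := fun a => (1 + a ^ 2) ^ (-r₀)

lemma ff_cont : Continuous (ff r₀) :=
  (continuous_const.add (continuous_pow 2)).rpow_const fun a => Or.inl (by simp only [Pi.add_apply]; positivity)

lemma ff_nonneg (a : ℝ) : 0 ≤ ff r₀ a := Real.rpow_nonneg (by positivity) _

lemma ff_le_one (hr : 0 ≤ r₀) (a : ℝ) : ff r₀ a ≤ 1 :=
  Real.rpow_le_one_of_one_le_of_nonpos (by nlinarith [sq_nonneg a]) (by linarith)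

lemma ff_integrable (hr₀ : 1/2 < r₀) : Integrable (ff r₀) := by
  have h2 : (1 : ℝ) < 2 * r₀ := by linarith
  have hbase : Integrable (fun a : ℝ => (1 + ‖a‖) ^ (-(2 * r₀))) := by
    apply integrable_one_add_norm
    simpa using h2
  refine ((hbase.const_mul ((2:ℝ) ^ r₀)).mono' (ff_cont.aestronglyMeasurable) ?_)
  filter_upwards with a
  rw [Real.norm_eq_abs, abs_of_nonneg (ff_nonneg a)]
  have h1 : (0:ℝ) < 1 + a ^ 2 := by positivity
  have h1' : (0:ℝ) < 1 + ‖a‖ := by positivity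
  have key : (1 + ‖a‖) ^ (-(2 * r₀)) = ((1 + ‖a‖) ^ (2:ℕ)) ^ (-r₀) := by
    rw [← Real.rpow_natCast (1 + ‖a‖) 2, ← Real.rpow_mul h1'.le]
    norm_num
  have hle : (1 + a ^ 2) ≤ (1 + ‖a‖) ^ (2:ℕ) := by
    have : |a| ^ 2 = a ^ 2 := sq_abs a
    rw [Real.norm_eq_abs]
    nlinarith [abs_nonneg a]
  calc ff r₀ a ≤ ((1 + ‖a‖)^(2:ℕ) / 2) ^ (-r₀) := by
        apply Real.rpow_le_rpow_of_nonpos (by positivity) ?_ (by linarith)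
        rw [Real.norm_eq_abs] at *
        nlinarith [abs_nonneg a, sq_abs a, sq_nonneg (|a| - 1)]
      _ = (2:ℝ) ^ r₀ * (1 + ‖a‖) ^ (-(2 * r₀)) := by
        rw [Real.div_rpow (by positivity) (by norm_num), key, Real.rpow_neg (by norm_num : (0:ℝ) ≤ 2)]
        field_simp


lemma oneD_bound {r₀ : ℝ} (hr₀ : 1/2 < r₀) :
    ∃ M : ℝ, 0 < M ∧ ∀ c : ℝ, 0 ≤ c →
      ∫ t in Icc (-2:ℝ) 2, ff r₀ (c * t) ≤ M * (1 + c ^ 2) ^ (-(1:ℝ)/2) := by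
  have hr0 : (0:ℝ) ≤ r₀ := by linarith
  set K : ℝ := ∫ t, ff r₀ t with hK
  have hK0 : 0 ≤ K := integral_nonneg ff_nonneg
  refine ⟨max 8 (2*K), lt_of_lt_of_le (by norm_num) (le_max_left _ _), fun c hc => ?_⟩
  set M := max 8 (2*K) with hM
  -- (1+c)⁻¹ ≤ (1+c²)^(-1/2)
  have hpos : (0:ℝ) < 1 + c ^ 2 := by positivity
  have hcp : (0:ℝ) < 1 + c := by linarith
  have hrpow : (1 + c)⁻¹ ≤ (1 + c ^ 2) ^ (-(1:ℝ)/2) := by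
    have h1 : (1 + c ^ 2) ^ (-(1:ℝ)/2) = (Real.sqrt (1 + c ^ 2))⁻¹ := by
      rw [Real.sqrt_eq_rpow, ← Real.rpow_neg hpos.le]
      norm_num
    rw [h1]
    apply inv_anti₀ (Real.sqrt_pos.mpr hpos)
    rw [show (1:ℝ) + c = Real.sqrt ((1+c)^2) from (Real.sqrt_sq hcp.le).symm]
    apply Real.sqrt_le_sqrt
    nlinarith
  have key : ∫ t in Icc (-2:ℝ) 2, ff r₀ (c * t) ≤ M * (1 + c)⁻¹ := by
    rcases le_or_gt c 1 with h1 | h1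
    · have hle4 : ∫ t in Icc (-2:ℝ) 2, ff r₀ (c * t) ≤ 4 := by
        have hone : ∫ _t in Icc (-2:ℝ) 2, (1:ℝ) = 4 := by
          simp [Real.volume_Icc]
          norm_num
        have : ∫ t in Icc (-2:ℝ) 2, ff r₀ (c * t) ≤ ∫ _t in Icc (-2:ℝ) 2, (1:ℝ) := by
          apply setIntegral_mono_on
          · exact ((ff_cont.comp (continuous_const.mul continuous_id)).continuousOn).integrableOn_compact isCompact_Icc
          · exact (integrableOn_const_iff (C := (1:ℝ))).mpr (Or.inr (by simp [Real.volume_Icc]))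
          · exact measurableSet_Icc
          · exact fun t _ => ff_le_one hr0 _
        linarith
      calc ∫ t in Icc (-2:ℝ) 2, ff r₀ (c * t) ≤ 4 := hle4
        _ ≤ M * (1 + c)⁻¹ := by
          have h8 : (8:ℝ) ≤ M := le_max_left _ _
          have hc2 : (1+c) ≤ 2 := by linarith
          have hi : (2:ℝ)⁻¹ ≤ (1+c)⁻¹ := by
            apply inv_anti₀ hcp hc2
          calc (4:ℝ) = 8 * 2⁻¹ := by norm_num
            _ ≤ M * (1+c)⁻¹ := by
              apply mul_le_mul h8 hi (by norm_num) (by linarith)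
    · have hc0 : (0:ℝ) < c := by linarith
      have hint : Integrable (fun t => ff r₀ (c * t)) :=
        (ff_integrable hr₀).comp_mul_left' hc0.ne'
      have h2 : ∫ t in Icc (-2:ℝ) 2, ff r₀ (c * t) ≤ ∫ t, ff r₀ (c * t) :=
        setIntegral_le_integral hint (Filter.Eventually.of_forall fun t => ff_nonneg _)
      have h3 : ∫ t, ff r₀ (c * t) = c⁻¹ * K := by
        rw [Measure.integral_comp_mul_left (ff r₀) c, abs_of_nonneg (by positivity), smul_eq_mul]
      have h4 : c⁻¹ * K ≤ M * (1 + c)⁻¹ := by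
        have h2K : 2 * K ≤ K + K * c := by nlinarith
        have hM2 : 2 * K ≤ M := le_max_right _ _
        have hMc : 0 ≤ M := by positivity
        have key2 : K * (1 + c) ≤ M * c := by nlinarith
        have := (div_le_div_iff₀ hc0 hcp).mpr (by linarith : K * (1+c) ≤ M * c)
        calc c⁻¹ * K = K / c := by ring
          _ ≤ M / (1+c) := this
          _ = M * (1+c)⁻¹ := by ring
      linarith
  calc ∫ t in Icc (-2:ℝ) 2, ff r₀ (c * t) ≤ M * (1 + c)⁻¹ := key
    _ ≤ M * (1 + c ^ 2) ^ (-(1:ℝ)/2) := by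
      apply mul_le_mul_of_nonneg_left hrpow (le_trans (by norm_num) (le_max_left 8 (2*K)))



noncomputable def kk : ℝ → ℝ := (Set.Ioc (1:ℝ) 2).indicator 1

lemma key_identity (d : ℕ) [NeZero d] (r₀ : ℝ) (v : EuclideanSpace ℝ (Fin d)) :
    (∫ x : EuclideanSpace ℝ (Fin d), ff r₀ (‖x‖⁻¹ * (inner ℝ x v : ℝ)) * kk ‖x‖)
    = (∫ ω : Metric.sphere (0 : EuclideanSpace ℝ (Fin d)) 1,
        ff r₀ ((inner ℝ (ω : EuclideanSpace ℝ (Fin d)) v : ℝ))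
        ∂((volume : Measure (EuclideanSpace ℝ (Fin d))).toSphere))
      * ∫ r : Set.Ioi (0:ℝ), kk r.1
          ∂(Measure.volumeIoiPow (Module.finrank ℝ (EuclideanSpace ℝ (Fin d)) - 1)) := by
  have h := (volume : Measure (EuclideanSpace ℝ (Fin d))).measurePreserving_homeomorphUnitSphereProd
  have h2 := h.integral_comp (Homeomorph.measurableEmbedding _)
    (fun p : Metric.sphere (0 : EuclideanSpace ℝ (Fin d)) 1 × Set.Ioi (0:ℝ) =>
      ff r₀ ((inner ℝ (p.1 : EuclideanSpace ℝ (Fin d)) v : ℝ)) * kk p.2.1)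
  rw [← integral_prod_mul, ← h2]
  have h3 : ∀ x : ({0}ᶜ : Set (EuclideanSpace ℝ (Fin d))),
      ff r₀ ((inner ℝ ((homeomorphUnitSphereProd _ x).1 : EuclideanSpace ℝ (Fin d)) v : ℝ))
        * kk ((homeomorphUnitSphereProd _ x).2 : ℝ)
      = ff r₀ (‖(x : EuclideanSpace ℝ (Fin d))‖⁻¹ * (inner ℝ (x : EuclideanSpace ℝ (Fin d)) v : ℝ)) * kk ‖(x : EuclideanSpace ℝ (Fin d))‖ := by
    intro x
    simp only [homeomorphUnitSphereProd_apply_fst_coe, homeomorphUnitSphereProd_apply_snd_coe,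
      real_inner_smul_left]
  simp only [h3]
  rw [integral_subtype_comap (measurableSet_singleton _).compl
      (fun x => ff r₀ (‖x‖⁻¹ * (inner ℝ x v : ℝ)) * kk ‖x‖),
    restrict_compl_singleton]

lemma kk_vol_ge_one (n : ℕ) :
    1 ≤ ∫ r : Set.Ioi (0:ℝ), kk r.1 ∂(Measure.volumeIoiPow n) := by
  have h1 : (∫ r : Set.Ioi (0:ℝ), kk r.1 ∂(Measure.volumeIoiPow n))
      = ∫ a in Set.Ioi (0:ℝ), (Real.toNNReal (a ^ n)) • kk a := by
    simp only [Measure.volumeIoiPow, ENNReal.ofReal]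
    rw [integral_withDensity_eq_integral_smul
        ((measurable_subtype_coe.pow_const _).real_toNNReal),
      integral_subtype_comap measurableSet_Ioi
        (fun a : ℝ => Real.toNNReal (a ^ n) • kk a)]
  have h2 : ∫ a in Set.Ioi (0:ℝ), (Real.toNNReal (a ^ n)) • kk a
      = ∫ a in Set.Ioc (1:ℝ) 2, a ^ n := by
    rw [setIntegral_congr_fun measurableSet_Ioi
        (g := fun a => (Set.Ioc (1:ℝ) 2).indicator (fun a => a ^ n) a)
        (fun x hx => ?_)]
    · have hsub : Set.Ioi (0:ℝ) ∩ Set.Ioc 1 2 = Set.Ioc 1 2 :=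
        Set.inter_eq_right.mpr (fun a (ha : a ∈ Set.Ioc (1:ℝ) 2) => lt_trans one_pos ha.1)
      rw [setIntegral_indicator measurableSet_Ioc, hsub]
    · rw [NNReal.smul_def, Real.coe_toNNReal _ (pow_nonneg hx.out.le _), smul_eq_mul]
      unfold kk
      by_cases h : x ∈ Set.Ioc (1:ℝ) 2 <;> simp [h]
  have h3 : (1:ℝ) ≤ ∫ a in Set.Ioc (1:ℝ) 2, a ^ n := by
    have hone : ∫ _a in Set.Ioc (1:ℝ) 2, (1:ℝ) = 1 := by
      simp [Real.volume_Ioc]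
      norm_num
    have hmono := setIntegral_mono_on
      ((integrableOn_const_iff (C := (1:ℝ))).mpr (Or.inr (measure_Ioc_lt_top (μ := volume))))
      ((intervalIntegral.intervalIntegrable_pow n).1)
      measurableSet_Ioc
      (fun x (hx : x ∈ Set.Ioc (1:ℝ) 2) => one_le_pow₀ hx.1.le)
    linarith
  rw [h1, h2]; exact h3


lemma sphere_le_ball (d : ℕ) [NeZero d] {r₀ : ℝ} (hr₀ : 1/2 < r₀)
    (v : EuclideanSpace ℝ (Fin d)) :
    (∫ ω : Metric.sphere (0 : EuclideanSpace ℝ (Fin d)) 1,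
        ff r₀ ((inner ℝ (ω : EuclideanSpace ℝ (Fin d)) v : ℝ))
        ∂((volume : Measure (EuclideanSpace ℝ (Fin d))).toSphere))
    ≤ (4:ℝ) ^ r₀ * ∫ x : EuclideanSpace ℝ (Fin d),
        (Metric.closedBall (0 : EuclideanSpace ℝ (Fin d)) 2).indicator
          (fun x => ff r₀ (inner ℝ x v : ℝ)) x := by
  have hr0 : (0:ℝ) ≤ r₀ := by linarith
  set S := ∫ ω : Metric.sphere (0 : EuclideanSpace ℝ (Fin d)) 1,
      ff r₀ ((inner ℝ (ω : EuclideanSpace ℝ (Fin d)) v : ℝ))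
      ∂((volume : Measure (EuclideanSpace ℝ (Fin d))).toSphere) with hS
  have hS0 : 0 ≤ S := integral_nonneg (fun ω => ff_nonneg _)
  have hc := kk_vol_ge_one (Module.finrank ℝ (EuclideanSpace ℝ (Fin d)) - 1)
  have step1 : S ≤ ∫ x : EuclideanSpace ℝ (Fin d), ff r₀ (‖x‖⁻¹ * (inner ℝ x v : ℝ)) * kk ‖x‖ := by
    rw [key_identity d r₀ v]
    exact le_mul_of_one_le_right hS0 hc
  have hind : Integrable ((Metric.closedBall (0 : EuclideanSpace ℝ (Fin d)) 2).indicator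
      (fun x => ff r₀ (inner ℝ x v : ℝ))) := by
    apply IntegrableOn.integrable_indicator _ measurableSet_closedBall
    exact ((ff_cont.comp (Continuous.inner continuous_id continuous_const)).continuousOn).integrableOn_compact
      (isCompact_closedBall _ _)
  have step2 : ∫ x : EuclideanSpace ℝ (Fin d), ff r₀ (‖x‖⁻¹ * (inner ℝ x v : ℝ)) * kk ‖x‖
      ≤ ∫ x : EuclideanSpace ℝ (Fin d), (4:ℝ) ^ r₀ *
        (Metric.closedBall (0 : EuclideanSpace ℝ (Fin d)) 2).indicator
          (fun x => ff r₀ (inner ℝ x v : ℝ)) x := by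
    apply integral_mono_of_nonneg
    · filter_upwards with x
      exact mul_nonneg (ff_nonneg _) (Set.indicator_nonneg (fun _ _ => zero_le_one) _)
    · exact hind.const_mul _
    · filter_upwards with x
      by_cases h : ‖x‖ ∈ Set.Ioc (1:ℝ) 2
      · have hx2 : x ∈ Metric.closedBall (0 : EuclideanSpace ℝ (Fin d)) 2 :=
          mem_closedBall_zero_iff.mpr h.2
        have hkk : kk ‖x‖ = 1 := by unfold kk; simp [h]
        rw [hkk, mul_one, Set.indicator_of_mem hx2]
        set s : ℝ := (inner ℝ x v : ℝ) with hs
        have hnx : (1:ℝ) < ‖x‖ := h.1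
        have hfrac : (1 + s ^ 2)/4 ≤ 1 + (‖x‖⁻¹ * s) ^ 2 := by
          have h4 : ‖x‖ ^ 2 ≤ 4 := by nlinarith [h.2]
          have hxpos : (0:ℝ) < ‖x‖ ^ 2 := by positivity
          have : s ^ 2 / 4 ≤ s ^ 2 / ‖x‖ ^ 2 := by
            apply div_le_div_of_nonneg_left (sq_nonneg s) hxpos h4
          have heq : (‖x‖⁻¹ * s) ^ 2 = s ^ 2 / ‖x‖ ^ 2 := by
            field_simp
          nlinarith
        calc ff r₀ (‖x‖⁻¹ * s) ≤ ((1 + s ^ 2)/4) ^ (-r₀) := by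
              apply Real.rpow_le_rpow_of_nonpos (by positivity) hfrac (by linarith)
            _ = (4:ℝ) ^ r₀ * ff r₀ s := by
              unfold ff
              rw [Real.div_rpow (by positivity) (by norm_num),
                Real.rpow_neg (by norm_num : (0:ℝ) ≤ 4)]
              field_simp
      · have hkk : kk ‖x‖ = 0 := by unfold kk; simp [h]
        rw [hkk, mul_zero]
        exact mul_nonneg (Real.rpow_nonneg (by norm_num) _)
          (Set.indicator_nonneg (fun y _ => ff_nonneg _) _)
  rw [← MeasureTheory.integral_const_mul]
  exact le_trans step1 step2


lemma ball_rotate (d : ℕ) [NeZero d] (r₀ : ℝ) (v : EuclideanSpace ℝ (Fin d)) :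
    (∫ x : EuclideanSpace ℝ (Fin d),
        (Metric.closedBall (0 : EuclideanSpace ℝ (Fin d)) 2).indicator
          (fun x => ff r₀ (inner ℝ x v : ℝ)) x)
    = ∫ x : EuclideanSpace ℝ (Fin d),
        (Metric.closedBall (0 : EuclideanSpace ℝ (Fin d)) 2).indicator
          (fun x => ff r₀ (‖v‖ * x 0)) x := by
  by_cases hv : v = 0
  · subst hv
    congr 1
    ext x
    simp [inner_zero_right]
  · set w : EuclideanSpace ℝ (Fin d) := EuclideanSpace.single (0 : Fin d) ‖v‖ with hw
    have hnw : ‖w‖ = ‖v‖ := by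
      rw [hw, EuclideanSpace.norm_single, Real.norm_eq_abs, abs_of_nonneg (norm_nonneg v)]
    set T : EuclideanSpace ℝ (Fin d) ≃ₗᵢ[ℝ] EuclideanSpace ℝ (Fin d) :=
      Submodule.reflection (ℝ ∙ (w - v))ᗮ with hT
    have hTw : T w = v := Submodule.reflection_sub hnw
    have hmp : MeasurePreserving T := T.measurePreserving
    have hcomp := hmp.integral_comp T.toHomeomorph.measurableEmbedding
      (fun x => (Metric.closedBall (0 : EuclideanSpace ℝ (Fin d)) 2).indicator
          (fun x => ff r₀ (inner ℝ x v : ℝ)) x)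
    rw [← hcomp]
    congr 1
    ext y
    have hmem : T y ∈ Metric.closedBall (0 : EuclideanSpace ℝ (Fin d)) 2 ↔
        y ∈ Metric.closedBall (0 : EuclideanSpace ℝ (Fin d)) 2 := by
      simp [mem_closedBall_zero_iff]
    have hinner : (inner ℝ (T y) v : ℝ) = ‖v‖ * y 0 := by
      rw [← hTw, T.inner_map_map, hw, EuclideanSpace.inner_single_right]
      simp [mul_comm]
    by_cases h : y ∈ Metric.closedBall (0 : EuclideanSpace ℝ (Fin d)) 2
    · rw [Set.indicator_of_mem (hmem.mpr h), Set.indicator_of_mem h, hinner]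
    · rw [Set.indicator_of_notMem (fun hc => h (hmem.mp hc)), Set.indicator_of_notMem h]

lemma ball_le_prod (d : ℕ) [NeZero d] (r₀ : ℝ) (c : ℝ) :
    (∫ x : EuclideanSpace ℝ (Fin d),
        (Metric.closedBall (0 : EuclideanSpace ℝ (Fin d)) 2).indicator
          (fun x => ff r₀ (c * x 0)) x)
    ≤ (4:ℝ) ^ (d - 1) * ∫ t in Icc (-2:ℝ) 2, ff r₀ (c * t) := by
  classical
  set e := (MeasurableEquiv.toLp 2 (Fin d → ℝ)).symm with he
  have hmp : MeasurePreserving e.symm :=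
    (EuclideanSpace.volume_preserving_symm_measurableEquiv_toLp (Fin d)).symm
  have htr := hmp.integral_comp e.symm.measurableEmbedding
    (fun x : EuclideanSpace ℝ (Fin d) =>
      (Metric.closedBall (0 : EuclideanSpace ℝ (Fin d)) 2).indicator
        (fun x => ff r₀ (c * x 0)) x)
  rw [← htr]
  set S : Set (Fin d → ℝ) :=
    (⇑e.symm) ⁻¹' (Metric.closedBall (0 : EuclideanSpace ℝ (Fin d)) 2) with hSdef
  have hcoord : ∀ (y : Fin d → ℝ) (i : Fin d), (e.symm y : EuclideanSpace ℝ (Fin d)) i = y i :=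
    fun y i => rfl
  have hrw : ∀ y : Fin d → ℝ,
      (Metric.closedBall (0 : EuclideanSpace ℝ (Fin d)) 2).indicator
        (fun x => ff r₀ (c * x 0)) (e.symm y)
      = S.indicator (fun y : Fin d → ℝ => ff r₀ (c * y 0)) y := by
    intro y
    by_cases h : y ∈ S
    · rw [Set.indicator_of_mem h, Set.indicator_of_mem (by exact h)]
      rfl
    · rw [Set.indicator_of_notMem h, Set.indicator_of_notMem (by exact h)]
  simp only [hrw]
  -- the product functions
  set g : Fin d → ℝ → ℝ := fun i =>
    if i = 0 then (Icc (-2:ℝ) 2).indicator (fun t => ff r₀ (c * t))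
    else (Icc (-2:ℝ) 2).indicator 1 with hg
  have hg_nonneg : ∀ i t, 0 ≤ g i t := by
    intro i t
    by_cases h : i = 0 <;>
      simp only [hg, h, if_true, if_false, reduceIte] <;>
      exact Set.indicator_nonneg (fun a _ => by first | exact ff_nonneg _ | exact zero_le_one) _
  have hg_int : ∀ i, Integrable (g i) := by
    intro i
    by_cases h : i = 0 <;> simp only [hg, h, if_true, if_false, reduceIte]
    · exact ((ff_cont.comp (continuous_const.mul continuous_id)).continuousOn.integrableOn_compact
        isCompact_Icc).integrable_indicator measurableSet_Icc
    · exact ((integrableOn_const_iff (C := (1:ℝ))).mpr (Or.inr (measure_Icc_lt_top (μ := volume)))).integrable_indicator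
        measurableSet_Icc
  have hS_box : ∀ y ∈ S, ∀ i, y i ∈ Icc (-2:ℝ) 2 := by
    intro y hy i
    have hnorm : ‖(e.symm y : EuclideanSpace ℝ (Fin d))‖ ≤ 2 :=
      mem_closedBall_zero_iff.mp hy
    have habs : |y i| ≤ ‖(e.symm y : EuclideanSpace ℝ (Fin d))‖ := by
      rw [EuclideanSpace.norm_eq]
      rw [show |y i| = Real.sqrt (y i ^ 2) from (Real.sqrt_sq_eq_abs _).symm]
      apply Real.sqrt_le_sqrt
      calc y i ^ 2 = ‖(e.symm y : EuclideanSpace ℝ (Fin d)) i‖ ^ 2 := by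
            rw [hcoord, Real.norm_eq_abs, sq_abs]
        _ ≤ ∑ j, ‖(e.symm y : EuclideanSpace ℝ (Fin d)) j‖ ^ 2 :=
            Finset.single_le_sum (f := fun j => ‖(e.symm y : EuclideanSpace ℝ (Fin d)) j‖ ^ 2)
              (fun j _ => by positivity) (Finset.mem_univ i)
    rw [mem_Icc]
    constructor <;> [linarith [abs_le.mp (habs.trans hnorm) |>.1];
      exact (abs_le.mp (habs.trans hnorm)).2]
  have hmono : (∫ y : Fin d → ℝ, S.indicator (fun y : Fin d → ℝ => ff r₀ (c * y 0)) y)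
      ≤ ∫ y : Fin d → ℝ, ∏ i, g i (y i) := by
    apply integral_mono_of_nonneg
    · filter_upwards with y
      exact Set.indicator_nonneg (fun a _ => ff_nonneg _) _
    · exact Integrable.fintype_prod hg_int
    · filter_upwards with y
      by_cases hy : y ∈ S
      · rw [Set.indicator_of_mem hy]
        have : ∏ i, g i (y i) = ff r₀ (c * y 0) := by
          rw [Finset.prod_eq_single (0 : Fin d)
            (fun b _ hb => by
              simp only [hg, hb, if_false, reduceIte]
              rw [Set.indicator_of_mem (hS_box y hy b)]; rfl)
            (fun h => absurd (Finset.mem_univ _) h)]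
          simp only [hg, if_true, reduceIte]
          rw [Set.indicator_of_mem (hS_box y hy 0)]
        rw [this]
      · rw [Set.indicator_of_notMem hy]
        exact Finset.prod_nonneg fun i _ => hg_nonneg i (y i)
  have hprod : (∫ y : Fin d → ℝ, ∏ i, g i (y i))
      = (∫ t in Icc (-2:ℝ) 2, ff r₀ (c * t)) * (4:ℝ) ^ (d - 1) := by
    rw [MeasureTheory.integral_fintype_prod_volume_eq_prod g]
    rw [← Finset.mul_prod_erase Finset.univ _ (Finset.mem_univ (0 : Fin d))]
    have h0 : ∫ t, g 0 t = ∫ t in Icc (-2:ℝ) 2, ff r₀ (c * t) := by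
      simp only [hg, reduceIte]
      rw [integral_indicator measurableSet_Icc]
    have hi : ∀ i ∈ Finset.univ.erase (0 : Fin d), ∫ t, g i t = 4 := by
      intro i hi
      have hne := Finset.ne_of_mem_erase hi
      simp only [hg, hne, if_false, reduceIte]
      rw [integral_indicator measurableSet_Icc]
      simp [Real.volume_Icc]
      norm_num
    rw [h0, Finset.prod_congr rfl hi, Finset.prod_const]
    congr 2
    rw [Finset.card_erase_of_mem (Finset.mem_univ _), Finset.card_univ, Fintype.card_fin]
  rw [hprod] at hmono
  calc _ ≤ (∫ t in Icc (-2:ℝ) 2, ff r₀ (c * t)) * (4:ℝ) ^ (d - 1) := hmono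
    _ = (4:ℝ) ^ (d - 1) * ∫ t in Icc (-2:ℝ) 2, ff r₀ (c * t) := mul_comm _ _


theorem sphere_average_decay (d : ℕ) (hd : 2 ≤ d) (r₀ : ℝ) (hr₀ : 1 / 2 < r₀) :
    ∃ C : ℝ, 0 < C ∧ ∀ v : EuclideanSpace ℝ (Fin d),
      (∫ ω : Metric.sphere (0 : EuclideanSpace ℝ (Fin d)) 1,
          (1 + (inner ℝ (ω : EuclideanSpace ℝ (Fin d)) v : ℝ) ^ 2) ^ (-r₀)
          ∂((volume : Measure (EuclideanSpace ℝ (Fin d))).toSphere)) ≤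
        C * (1 + ‖v‖ ^ 2) ^ (-(1 : ℝ) / 2) := by
  haveI : NeZero d := ⟨by omega⟩
  obtain ⟨M, hMpos, hMb⟩ := oneD_bound hr₀
  refine ⟨(4:ℝ) ^ r₀ * ((4:ℝ) ^ (d-1) * M), by positivity, fun v => ?_⟩
  have h4r : (0:ℝ) ≤ (4:ℝ) ^ r₀ := Real.rpow_nonneg (by norm_num) _
  have h4d : (0:ℝ) ≤ (4:ℝ) ^ (d-1) := by positivity
  calc (∫ ω : Metric.sphere (0 : EuclideanSpace ℝ (Fin d)) 1,
          (1 + (inner ℝ (ω : EuclideanSpace ℝ (Fin d)) v : ℝ) ^ 2) ^ (-r₀)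
          ∂((volume : Measure (EuclideanSpace ℝ (Fin d))).toSphere))
      = ∫ ω : Metric.sphere (0 : EuclideanSpace ℝ (Fin d)) 1,
          ff r₀ ((inner ℝ (ω : EuclideanSpace ℝ (Fin d)) v : ℝ))
          ∂((volume : Measure (EuclideanSpace ℝ (Fin d))).toSphere) := rfl
    _ ≤ (4:ℝ) ^ r₀ * ∫ x : EuclideanSpace ℝ (Fin d),
          (Metric.closedBall (0 : EuclideanSpace ℝ (Fin d)) 2).indicator
            (fun x => ff r₀ (inner ℝ x v : ℝ)) x := sphere_le_ball d hr₀ v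
    _ = (4:ℝ) ^ r₀ * ∫ x : EuclideanSpace ℝ (Fin d),
          (Metric.closedBall (0 : EuclideanSpace ℝ (Fin d)) 2).indicator
            (fun x => ff r₀ (‖v‖ * x 0)) x := by rw [ball_rotate d r₀ v]
    _ ≤ (4:ℝ) ^ r₀ * ((4:ℝ) ^ (d-1) * ∫ t in Icc (-2:ℝ) 2, ff r₀ (‖v‖ * t)) :=
        mul_le_mul_of_nonneg_left (ball_le_prod d r₀ ‖v‖) h4r
    _ ≤ (4:ℝ) ^ r₀ * ((4:ℝ) ^ (d-1) * (M * (1 + ‖v‖ ^ 2) ^ (-(1:ℝ)/2))) := by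
        apply mul_le_mul_of_nonneg_left _ h4r
        exact mul_le_mul_of_nonneg_left (hMb ‖v‖ (norm_nonneg v)) h4d
    _ = (4:ℝ) ^ r₀ * ((4:ℝ) ^ (d-1) * M) * (1 + ‖v‖ ^ 2) ^ (-(1:ℝ)/2) := by ring
end

section
/- Let C₀ > 0, ε ∈ (0,1), and m > 0. There exists a constant C' > 0 such that for every t ≥ 0: exp(−⟨t⟩^{1−ε}/((1−ε)C₀)) + ∫_0^t exp(−(⟨t⟩^{1−ε} − ⟨s⟩^{1−ε})/((1−ε)C₀)) · ⟨s⟩^{-m-ε} ds ≤ C' ⟨t⟩^{-m}. -/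
set_option maxHeartbeats 1000000

noncomputable def jb (t : ℝ) : ℝ := Real.sqrt (1 + t ^ 2)

lemma jb_pos (t : ℝ) : 0 < jb t := Real.sqrt_pos.2 (by positivity)

lemma one_le_jb (t : ℝ) : 1 ≤ jb t := by
  rw [show (1:ℝ) = Real.sqrt 1 from (Real.sqrt_one).symm]
  exact Real.sqrt_le_sqrt (by nlinarith [sq_nonneg t])

lemma le_jb (t : ℝ) : t ≤ jb t := by
  rcases le_or_gt t 0 with h | h
  · exact h.trans (jb_pos t).le
  · calc t = Real.sqrt (t ^ 2) := (Real.sqrt_sq h.le).symm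
      _ ≤ jb t := Real.sqrt_le_sqrt (by nlinarith)

lemma jb_mono {s t : ℝ} (hs : 0 ≤ s) (hst : s ≤ t) : jb s ≤ jb t :=
  Real.sqrt_le_sqrt (by nlinarith)

lemma continuous_jb : Continuous jb :=
  Real.continuous_sqrt.comp (by continuity)

lemma hasDerivAt_jb (t : ℝ) : HasDerivAt jb (t / jb t) t := by
  have h1 : HasDerivAt (fun t : ℝ => 1 + t ^ 2) (2 * t) t := by
    simpa using ((hasDerivAt_pow 2 t).const_add 1)
  have h2 := (Real.hasDerivAt_sqrt (x := 1 + t ^ 2) (by positivity)).comp t h1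
  convert h2 using 1
  · rfl
  · rfl
  · rfl
  unfold jb; field_simp

lemma hasDerivAt_jb_rpow (p t : ℝ) :
    HasDerivAt (fun t => jb t ^ p) (p * t * jb t ^ (p - 2)) t := by
  have h := (hasDerivAt_jb t).rpow_const (p := p) (Or.inl (jb_pos t).ne')
  convert h using 1
  have : jb t ^ (p - 1) = jb t ^ (p - 2) * jb t := by
    rw [← Real.rpow_add_one (jb_pos t).ne']; ring_nf
  rw [this]
  field_simp [(jb_pos t).ne']

lemma jb_le_sqrt2_mul {x : ℝ} (hx : 1 ≤ x) : jb x ≤ Real.sqrt 2 * x := by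
  have h : Real.sqrt 2 * x = Real.sqrt (2 * x ^ 2) := by
    rw [Real.sqrt_mul (by norm_num), Real.sqrt_sq (by linarith)]
  rw [h]
  exact Real.sqrt_le_sqrt (by nlinarith)

theorem polynomial_decay_convolution_estimate (C₀ : ℝ) (hC₀ : 0 < C₀)
    (ε : ℝ) (hε : ε ∈ Set.Ioo (0 : ℝ) 1) (m : ℝ) (hm : 0 < m) :
    ∃ C' : ℝ, 0 < C' ∧ ∀ t : ℝ, 0 ≤ t →
      Real.exp (-(jb t) ^ (1 - ε) / ((1 - ε) * C₀)) +
        (∫ s in Set.Icc (0 : ℝ) t,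
          Real.exp (-((jb t) ^ (1 - ε) - (jb s) ^ (1 - ε)) / ((1 - ε) * C₀)) *
            (jb s) ^ (-m - ε)) ≤
      C' * (jb t) ^ (-m) := by
  obtain ⟨hε0, hε1⟩ := hε
  have h1ε : 0 < 1 - ε := by linarith
  set c : ℝ := (1 - ε) * C₀ with hc_def
  have hc : 0 < c := mul_pos h1ε hC₀
  set g : ℝ → ℝ := fun s => Real.exp (jb s ^ (1 - ε) / c) * jb s ^ (-m - ε) with hg_def
  have hg_cont : Continuous g := by
    rw [hg_def]
    apply Continuous.mul
    · exact Real.continuous_exp.comp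
        ((continuous_jb.rpow_const (fun t => Or.inl (jb_pos t).ne')).div_const c)
    · exact continuous_jb.rpow_const (fun t => Or.inl (jb_pos t).ne')
  have hg_nonneg : ∀ s, 0 ≤ g s := fun s =>
    mul_nonneg (Real.exp_pos _).le (Real.rpow_nonneg (jb_pos s).le _)
  set Ψ : ℝ → ℝ := fun t => 1 + ∫ s in (0:ℝ)..t, g s with hΨ_def
  have hΨ' : ∀ x : ℝ, HasDerivAt Ψ (g x) x := by
    intro x
    rw [hΨ_def]
    exact (intervalIntegral.integral_hasDerivAt_right (hg_cont.intervalIntegrable 0 x)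
      (hg_cont.stronglyMeasurableAtFilter _ _) hg_cont.continuousAt).const_add 1
  set G : ℝ → ℝ := fun t => Real.exp (jb t ^ (1 - ε) / c) * jb t ^ (-m) with hG_def
  set G' : ℝ → ℝ := fun t => Real.exp (jb t ^ (1 - ε) / c) * t *
      (jb t ^ (-1 - ε - m) / C₀ - m * jb t ^ (-m - 2)) with hG'_def
  have hG' : ∀ t, HasDerivAt G (G' t) t := by
    intro t
    have hjb := jb_pos t
    have h1 : HasDerivAt (fun t => Real.exp (jb t ^ (1 - ε) / c))
        (Real.exp (jb t ^ (1 - ε) / c) * ((1 - ε) * t * jb t ^ ((1 - ε) - 2) / c)) t :=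
      ((hasDerivAt_jb_rpow (1 - ε) t).div_const c).exp
    have h3 := h1.mul (hasDerivAt_jb_rpow (-m) t)
    rw [hG_def]
    convert h3 using 1
    · rfl
    · rfl
    · rfl
    simp only [hG'_def]
    have e1 : jb t ^ ((1 - ε) - 2) * jb t ^ (-m) = jb t ^ (-1 - ε - m) := by
      rw [← Real.rpow_add hjb]; ring_nf
    have e2 : (1 - ε) * t * jb t ^ ((1 - ε) - 2) / c
        = t * jb t ^ ((1 - ε) - 2) / C₀ := by
      rw [hc_def]; field_simp
    rw [e2, ← e1]
    ring
  set T : ℝ := max 1 ((2 * m * C₀) ^ ((1:ℝ) / (1 - ε))) with hT_def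
  have hT1 : (1:ℝ) ≤ T := le_max_left _ _
  have hT0 : (0:ℝ) ≤ T := by linarith
  have hTkey : ∀ t, T ≤ t → 2 * m * C₀ ≤ jb t ^ (1 - ε) := by
    intro t ht
    have h2m : (0:ℝ) ≤ 2 * m * C₀ := by positivity
    have h1 : (2 * m * C₀) ^ ((1:ℝ) / (1 - ε)) ≤ jb t :=
      le_trans (le_max_right _ _) (ht.trans (le_jb t))
    calc 2 * m * C₀ = ((2 * m * C₀) ^ ((1:ℝ) / (1 - ε))) ^ (1 - ε) := by
          rw [← Real.rpow_mul h2m, one_div, inv_mul_cancel₀ h1ε.ne', Real.rpow_one]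
      _ ≤ jb t ^ (1 - ε) := Real.rpow_le_rpow (Real.rpow_nonneg h2m _) h1 h1ε.le
  set M : ℝ := Real.exp (jb T ^ (1 - ε) / c) with hM_def
  have hM0 : (0:ℝ) < M := Real.exp_pos _
  have hgle : ∀ x, 0 ≤ x → x ≤ T → g x ≤ M := by
    intro x hx0 hxT
    have h2 : jb x ^ (1 - ε) ≤ jb T ^ (1 - ε) :=
      Real.rpow_le_rpow (jb_pos x).le (jb_mono hx0 hxT) h1ε.le
    have h3 : jb x ^ (-m - ε) ≤ 1 :=
      Real.rpow_le_one_of_one_le_of_nonpos (one_le_jb x) (by linarith)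
    calc g x ≤ Real.exp (jb x ^ (1 - ε) / c) * 1 :=
          mul_le_mul_of_nonneg_left h3 (Real.exp_pos (jb x ^ (1 - ε) / c)).le
      _ ≤ M := by
          rw [mul_one, hM_def]
          exact Real.exp_le_exp.2 (by gcongr)
  set B : ℝ := 1 + M * T with hB_def
  have hΨle : ∀ t, 0 ≤ t → t ≤ T → Ψ t ≤ B := by
    intro t ht0 htT
    have hbound : ∀ x ∈ Set.uIoc (0:ℝ) t, ‖g x‖ ≤ M := by
      intro x hx
      rw [Set.uIoc_of_le ht0] at hx
      rw [Real.norm_of_nonneg (hg_nonneg x)]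
      exact hgle x hx.1.le (hx.2.trans htT)
    have hnorm := intervalIntegral.norm_integral_le_of_norm_le_const hbound
    have h2 : (∫ s in (0:ℝ)..t, g s) ≤ M * T := by
      calc (∫ s in (0:ℝ)..t, g s) ≤ ‖∫ s in (0:ℝ)..t, g s‖ := le_abs_self _
        _ ≤ M * |t - 0| := hnorm
        _ ≤ M * T := by
            rw [sub_zero, abs_of_nonneg ht0]
            exact mul_le_mul_of_nonneg_left htT hM0.le
    rw [hΨ_def, hB_def]
    simp only
    linarith
  set g₀ : ℝ := Real.exp (1 / c) * jb T ^ (-m) with hg₀_def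
  have hg₀ : 0 < g₀ := mul_pos (Real.exp_pos _) (Real.rpow_pos_of_pos (jb_pos T) _)
  have hGge : ∀ t, 0 ≤ t → t ≤ T → g₀ ≤ G t := by
    intro t ht0 htT
    have h1 : 1 ≤ jb t ^ (1 - ε) := Real.one_le_rpow (one_le_jb t) h1ε.le
    have h2 : jb T ^ (-m) ≤ jb t ^ (-m) :=
      Real.rpow_le_rpow_of_nonpos (jb_pos t) (jb_mono ht0 htT) (by linarith)
    have h3 : Real.exp (1 / c) ≤ Real.exp (jb t ^ (1 - ε) / c) :=
      Real.exp_le_exp.2 (by gcongr)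
    exact mul_le_mul h3 h2 (Real.rpow_pos_of_pos (jb_pos T) _).le (Real.exp_pos _).le
  set C' : ℝ := max (2 * Real.sqrt 2 * C₀) (B / g₀) with hC'_def
  have hsqrt2 : (0:ℝ) < Real.sqrt 2 := Real.sqrt_pos.2 (by norm_num)
  have hC'pos : 0 < C' :=
    lt_of_lt_of_le (by positivity) (le_max_left (2 * Real.sqrt 2 * C₀) (B / g₀))
  have key : ∀ t, 0 ≤ t → Ψ t ≤ C' * G t := by
    have onIcc : ∀ t, 0 ≤ t → t ≤ T → Ψ t ≤ C' * G t := by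
      intro t ht0 htT
      calc Ψ t ≤ B := hΨle t ht0 htT
        _ = (B / g₀) * g₀ := by field_simp
        _ ≤ C' * G t :=
            mul_le_mul (le_max_right _ _) (hGge t ht0 htT) hg₀.le hC'pos.le
    intro t ht0
    rcases le_or_gt t T with h | h
    · exact onIcc t ht0 h
    · have hD : ∀ x, HasDerivAt (fun y => C' * G y - Ψ y) (C' * G' x - g x) x :=
        fun x => ((hG' x).const_mul C').sub (hΨ' x)
      have hd_nonneg : ∀ x, T ≤ x → 0 ≤ C' * G' x - g x := by
        intro x hx
        have hx1 : (1:ℝ) ≤ x := hT1.trans hx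
        have hx0 : (0:ℝ) ≤ x := by linarith
        have hjb := jb_pos x
        have hkey := hTkey x hx
        set E : ℝ := Real.exp (jb x ^ (1 - ε) / c) with hE_def
        have hE : 0 < E := Real.exp_pos _
        have hpow1 : 0 < jb x ^ (1 - ε) := Real.rpow_pos_of_pos hjb _
        have e1 : jb x ^ (-m - 2) = jb x ^ (-1 - ε - m) * jb x ^ (ε - 1) := by
          rw [← Real.rpow_add hjb]; ring_nf
        have e2 : jb x ^ (ε - 1) = (jb x ^ (1 - ε))⁻¹ := by
          rw [show ε - 1 = -(1 - ε) by ring, Real.rpow_neg hjb.le]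
        have hm1 : m * jb x ^ (ε - 1) ≤ 1 / (2 * C₀) := by
          rw [e2, ← div_eq_mul_inv, div_le_div_iff₀ hpow1 (by positivity)]
          nlinarith
        have hA : 0 < jb x ^ (-1 - ε - m) := Real.rpow_pos_of_pos hjb _
        have hstep1 : jb x ^ (-1 - ε - m) / (2 * C₀) ≤
            jb x ^ (-1 - ε - m) / C₀ - m * jb x ^ (-m - 2) := by
          rw [e1]
          have h4 : jb x ^ (-1 - ε - m) * (m * jb x ^ (ε - 1))
              ≤ jb x ^ (-1 - ε - m) * (1 / (2 * C₀)) :=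
            mul_le_mul_of_nonneg_left hm1 hA.le
          have h5 : jb x ^ (-1 - ε - m) / C₀
              = jb x ^ (-1 - ε - m) / (2 * C₀) + jb x ^ (-1 - ε - m) / (2 * C₀) := by
            field_simp; ring
          have h4' : m * (jb x ^ (-1 - ε - m) * jb x ^ (ε - 1))
              ≤ jb x ^ (-1 - ε - m) / (2 * C₀) := by
            calc m * (jb x ^ (-1 - ε - m) * jb x ^ (ε - 1))
                = jb x ^ (-1 - ε - m) * (m * jb x ^ (ε - 1)) := by ring
              _ ≤ jb x ^ (-1 - ε - m) * (1 / (2 * C₀)) := h4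
              _ = jb x ^ (-1 - ε - m) / (2 * C₀) := by ring
          linarith
        have e3 : jb x ^ (-1 - ε - m) = jb x ^ (-m - ε) * (jb x)⁻¹ := by
          rw [← Real.rpow_neg_one (jb x), ← Real.rpow_add hjb]; ring_nf
        have hQ : 0 < jb x ^ (-m - ε) := Real.rpow_pos_of_pos hjb _
        have hstep2 : jb x ^ (-m - ε) / Real.sqrt 2 ≤ x * jb x ^ (-1 - ε - m) := by
          rw [e3]
          have h6 : 1 / Real.sqrt 2 ≤ x / jb x := by
            rw [div_le_div_iff₀ hsqrt2 hjb]
            nlinarith [jb_le_sqrt2_mul hx1]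
          have h7 : jb x ^ (-m - ε) * (1 / Real.sqrt 2)
              ≤ jb x ^ (-m - ε) * (x / jb x) :=
            mul_le_mul_of_nonneg_left h6 hQ.le
          have h8 : x * (jb x ^ (-m - ε) * (jb x)⁻¹)
              = jb x ^ (-m - ε) * (x / jb x) := by
            field_simp
          rw [h8]
          calc jb x ^ (-m - ε) / Real.sqrt 2 = jb x ^ (-m - ε) * (1 / Real.sqrt 2) := by
                ring
            _ ≤ jb x ^ (-m - ε) * (x / jb x) := h7
        have hGlb : E * jb x ^ (-m - ε) / (2 * Real.sqrt 2 * C₀) ≤ G' x := by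
          have hc1 : E * jb x ^ (-m - ε) / (2 * Real.sqrt 2 * C₀)
              = E * ((jb x ^ (-m - ε) / Real.sqrt 2) / (2 * C₀)) := by
            field_simp
          have hc2 : E * ((jb x ^ (-m - ε) / Real.sqrt 2) / (2 * C₀))
              ≤ E * ((x * jb x ^ (-1 - ε - m)) / (2 * C₀)) := by
            apply mul_le_mul_of_nonneg_left _ hE.le
            gcongr
          have hc3 : E * ((x * jb x ^ (-1 - ε - m)) / (2 * C₀))
              ≤ E * (x * (jb x ^ (-1 - ε - m) / C₀ - m * jb x ^ (-m - 2))) := by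
            apply mul_le_mul_of_nonneg_left _ hE.le
            have : (x * jb x ^ (-1 - ε - m)) / (2 * C₀)
                = x * (jb x ^ (-1 - ε - m) / (2 * C₀)) := by ring
            rw [this]
            exact mul_le_mul_of_nonneg_left hstep1 hx0
          have hc4 : E * (x * (jb x ^ (-1 - ε - m) / C₀ - m * jb x ^ (-m - 2))) = G' x := by
            simp only [hG'_def, hE_def]; ring
          linarith
        have hG'nn : 0 ≤ G' x := le_trans (by positivity) hGlb
        have h9 : 2 * Real.sqrt 2 * C₀ ≤ C' := le_max_left _ _
        have h10 : g x ≤ C' * G' x := by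
          calc g x = E * jb x ^ (-m - ε) := by rw [hg_def, hE_def]
            _ = (2 * Real.sqrt 2 * C₀) * (E * jb x ^ (-m - ε) / (2 * Real.sqrt 2 * C₀)) := by
                field_simp
            _ ≤ (2 * Real.sqrt 2 * C₀) * G' x :=
                mul_le_mul_of_nonneg_left hGlb (by positivity)
            _ ≤ C' * G' x := mul_le_mul_of_nonneg_right h9 hG'nn
        linarith
      have hmono : MonotoneOn (fun y => C' * G y - Ψ y) (Set.Ici T) := by
        apply monotoneOn_of_deriv_nonneg (convex_Ici T)
        · exact fun x _ => (hD x).differentiableAt.continuousAt.continuousWithinAt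
        · exact fun x _ => (hD x).differentiableAt.differentiableWithinAt
        · intro x hxmem
          rw [(hD x).deriv]
          exact hd_nonneg x (le_of_lt (by simpa [interior_Ici] using hxmem))
      have h0 := onIcc T hT0 le_rfl
      have h11 := hmono Set.self_mem_Ici (Set.mem_Ici.2 h.le) h.le
      simp only at h11
      linarith
  refine ⟨C', hC'pos, ?_⟩
  intro t ht
  have hpt : ∀ s : ℝ, Real.exp (-(jb t ^ (1 - ε) - jb s ^ (1 - ε)) / c) * jb s ^ (-m - ε)
      = Real.exp (-jb t ^ (1 - ε) / c) * g s := by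
    intro s
    rw [hg_def]
    simp only
    rw [show -(jb t ^ (1 - ε) - jb s ^ (1 - ε)) / c
        = -jb t ^ (1 - ε) / c + jb s ^ (1 - ε) / c by ring, Real.exp_add]
    ring
  have hicc : (∫ s in Set.Icc (0:ℝ) t,
        Real.exp (-(jb t ^ (1 - ε) - jb s ^ (1 - ε)) / c) * jb s ^ (-m - ε))
      = Real.exp (-jb t ^ (1 - ε) / c) * ∫ s in (0:ℝ)..t, g s := by
    rw [intervalIntegral.integral_of_le ht, ← MeasureTheory.integral_Icc_eq_integral_Ioc]
    simp_rw [hpt]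
    rw [MeasureTheory.integral_const_mul]
  rw [hicc]
  have hkey := key t ht
  have hmul : Real.exp (-jb t ^ (1 - ε) / c) * Ψ t
      ≤ Real.exp (-jb t ^ (1 - ε) / c) * (C' * G t) :=
    mul_le_mul_of_nonneg_left hkey (Real.exp_pos _).le
  have hGid : Real.exp (-jb t ^ (1 - ε) / c) * (C' * G t) = C' * jb t ^ (-m) := by
    rw [hG_def]
    simp only
    rw [show -jb t ^ (1 - ε) / c = -(jb t ^ (1 - ε) / c) by ring, Real.exp_neg]
    field_simp
  rw [hΨ_def] at hmul
  simp only at hmul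
  calc Real.exp (-jb t ^ (1 - ε) / c)
        + Real.exp (-jb t ^ (1 - ε) / c) * ∫ s in (0:ℝ)..t, g s
      = Real.exp (-jb t ^ (1 - ε) / c) * (1 + ∫ s in (0:ℝ)..t, g s) := by ring
    _ ≤ Real.exp (-jb t ^ (1 - ε) / c) * (C' * G t) := hmul
    _ = C' * jb t ^ (-m) := hGid
end
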